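/- Let 0 < p_1 < p_2 < ... < p_n and let r = 2k-1 be an odd integer with 1 ≤ r ≤ n. Then the inertia of the Loewner matrix L_r is (k, n-r, k-1), i.e., L_r has exactly k positive eigenvalues, n-r zero eigenvalues, and k-1 negative eigenvalues (counted with multiplicity). -/

import Mathlib

open Matrix Finset

/-- The Loewner matrix `L_r` associated with points `p 0, ..., p (n-1)` and exponent `r`:
its `(i,j)` entry is `(p i ^ r - p j ^ r) / (p i - p j)` for `i ≠ j` and `r * p i ^ (r-1)`
for `i = j` (powers are real powers `Real.rpow`). -/
noncomputable def loewner {n : ℕ} (p : Fin n → ℝ) (r : ℝ) : Matrix (Fin n) (Fin n) ℝ :=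
  Matrix.of fun i j => if i = j then r * p i ^ (r - 1) else (p i ^ r - p j ^ r) / (p i - p j)

variable {n : ℕ} {A : Matrix (Fin n) (Fin n) ℝ} (hA : A.IsHermitian)

lemma dot_eq_inner (y z : EuclideanSpace ℝ (Fin n)) :
    dotProduct (y : Fin n → ℝ) (z : Fin n → ℝ) = inner ℝ y z := by
  simp [PiLp.inner_apply, RCLike.inner_apply, dotProduct, mul_comm]

lemma repr_mulVec (x : EuclideanSpace ℝ (Fin n)) (i : Fin n) :
    hA.eigenvectorBasis.repr (WithLp.toLp 2 (A *ᵥ x : Fin n → ℝ)) i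
      = hA.eigenvalues i * hA.eigenvectorBasis.repr x i := by
  rw [OrthonormalBasis.repr_apply_apply, OrthonormalBasis.repr_apply_apply]
  rw [← dot_eq_inner, ← dot_eq_inner]
  have h1 : dotProduct (hA.eigenvectorBasis i : Fin n → ℝ) (A *ᵥ x)
      = dotProduct (A *ᵥ (hA.eigenvectorBasis i : Fin n → ℝ)) x := by
    have ht : Aᵀ = A := by
      ext i' j'
      simpa using congrFun (congrFun hA i') j'
    rw [Matrix.dotProduct_mulVec, ← Matrix.mulVec_transpose, ht]
  rw [h1]
  erw [hA.mulVec_eigenvectorBasis]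
  rw [smul_dotProduct]
  rfl

lemma quad_formula (x : EuclideanSpace ℝ (Fin n)) :
    dotProduct (x : Fin n → ℝ) (A *ᵥ x) =
      ∑ i, hA.eigenvalues i * (hA.eigenvectorBasis.repr x i) ^ 2 := by
  rw [dot_eq_inner x (WithLp.toLp 2 (A *ᵥ x : Fin n → ℝ))]
  rw [← hA.eigenvectorBasis.repr.inner_map_map x]
  rw [EuclideanSpace.inner_eq_star_dotProduct]
  simp only [dotProduct, Pi.star_apply, star_trivial, RCLike.star_def]
  refine Finset.sum_congr rfl fun i _ => ?_
  rw [repr_mulVec hA x i]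
  ring

lemma finrank_le_card_sign (s : ℝ) (W : Submodule ℝ (EuclideanSpace ℝ (Fin n)))
    (hW : ∀ x ∈ W, x ≠ 0 → 0 < s * dotProduct (x : Fin n → ℝ) (A *ᵥ x)) :
    Module.finrank ℝ W ≤ Fintype.card {i // 0 < s * hA.eigenvalues i} := by
  classical
  set b := hA.eigenvectorBasis with hb
  set P : Fin n → Prop := fun i => 0 < s * hA.eigenvalues i with hP
  set N : Submodule ℝ (EuclideanSpace ℝ (Fin n)) :=
    Submodule.span ℝ (Set.range fun i : {i // ¬ P i} => b i) with hN
  have li : LinearIndependent ℝ (fun i : {i // ¬ P i} => b i) :=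
    (b.orthonormal.linearIndependent).comp _ Subtype.val_injective
  have hNrank : Module.finrank ℝ N = Fintype.card {i // ¬ P i} := by
    rw [hN, finrank_span_eq_card li]
  have hrep : ∀ x ∈ N, ∀ i, P i → b.repr x i = 0 := by
    intro x hx i hPi
    rw [OrthonormalBasis.repr_apply_apply]
    induction hx using Submodule.span_induction with
    | mem y hy =>
      obtain ⟨j, rfl⟩ := hy
      exact b.orthonormal.2 (fun h : i = j.1 => j.2 (h ▸ hPi)) 
    | zero => simp
    | add y z _ _ hy hz => rw [inner_add_right, hy, hz, add_zero]
    | smul c y _ hy => rw [inner_smul_right, hy, mul_zero]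
  have hneg : ∀ x ∈ N, s * dotProduct (x : Fin n → ℝ) (A *ᵥ x) ≤ 0 := by
    intro x hx
    rw [quad_formula hA x, Finset.mul_sum]
    refine Finset.sum_nonpos fun i _ => ?_
    by_cases hPi : P i
    · rw [hrep x hx i hPi]; ring_nf; rfl
    · have h1 : s * hA.eigenvalues i ≤ 0 := not_lt.1 hPi
      have h2 : (0:ℝ) ≤ (b.repr x i) ^ 2 := sq_nonneg _
      calc s * (hA.eigenvalues i * (b.repr x i) ^ 2)
          = (s * hA.eigenvalues i) * (b.repr x i) ^ 2 := by ring
        _ ≤ 0 := mul_nonpos_of_nonpos_of_nonneg h1 h2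
  have disj : W ⊓ N = ⊥ := by
    rw [Submodule.eq_bot_iff]
    intro x hx
    by_contra hx0
    exact absurd (hW x hx.1 hx0) (not_lt.2 (hneg x hx.2))
  have hsum := Submodule.finrank_sup_add_finrank_inf_eq W N
  rw [disj, finrank_bot] at hsum
  have hle : Module.finrank ℝ (W ⊔ N : Submodule ℝ (EuclideanSpace ℝ (Fin n))) ≤ n := by
    have := Submodule.finrank_le (W ⊔ N : Submodule ℝ (EuclideanSpace ℝ (Fin n)))
    simpa [finrank_euclideanSpace_fin] using this
  have hcompl : Fintype.card {i // ¬ P i} = n - Fintype.card {i // P i} := by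
    have := Fintype.card_subtype_compl P
    simpa using this
  have hcard_le : Fintype.card {i // P i} ≤ n := by
    have := Fintype.card_subtype_le P
    simpa using this
  have hfin : Fintype.card {i // 0 < s * hA.eigenvalues i} = Fintype.card {i // P i} :=
    Fintype.card_congr (Equiv.subtypeEquivRight fun i => by rw [hP])
  omega

noncomputable def momentMap {n : ℕ} (p : Fin n → ℝ) (r : ℕ) : (Fin n → ℝ) →ₗ[ℝ] (Fin r → ℝ) where
  toFun x := fun a => ∑ i, x i * p i ^ (a : ℕ)
  map_add' x y := by funext a; simp [add_mul, Finset.sum_add_distrib]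
  map_smul' c x := by funext a; simp [Finset.mul_sum, mul_assoc]

lemma momentMap_apply {n : ℕ} (p : Fin n → ℝ) (r : ℕ) (x : Fin n → ℝ) (a : Fin r) :
    momentMap p r x a = ∑ i, x i * p i ^ (a : ℕ) := rfl

lemma loewner_entry {n : ℕ} (p : Fin n → ℝ) {r : ℕ} (hp : ∀ i, 0 < p i)
    (hinj : Function.Injective p) (hr1 : 1 ≤ r) (i j : Fin n) :
    loewner p (r : ℝ) i j = ∑ a : Fin r, p i ^ (a : ℕ) * p j ^ (r - 1 - (a : ℕ)) := by
  have hcast : ((r : ℝ) - 1) = ((r - 1 : ℕ) : ℝ) := by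
    rw [Nat.cast_sub hr1]; simp
  by_cases hij : i = j
  · subst hij
    simp only [loewner, Matrix.of_apply, if_pos rfl]
    rw [hcast, Real.rpow_natCast]
    have : ∀ a : Fin r, p i ^ (a : ℕ) * p i ^ (r - 1 - (a : ℕ)) = p i ^ (r - 1) := by
      intro a
      rw [← pow_add]
      congr 1
      omega
    rw [Finset.sum_congr rfl fun a _ => this a, Finset.sum_const, Finset.card_univ,
      Fintype.card_fin, nsmul_eq_mul]
    simp
  · have hne : p i - p j ≠ 0 := sub_ne_zero.2 fun h => hij (hinj h)
    simp only [loewner, Matrix.of_apply, if_neg hij]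
    rw [Real.rpow_natCast, Real.rpow_natCast, div_eq_iff hne,
      Fin.sum_univ_eq_sum_range (fun a => p i ^ a * p j ^ (r - 1 - a))]
    exact (geom_sum₂_mul (p i) (p j) r).symm

lemma quad_eq_moment {n : ℕ} (p : Fin n → ℝ) {r : ℕ} (hp : ∀ i, 0 < p i)
    (hinj : Function.Injective p) (hr1 : 1 ≤ r) (x : Fin n → ℝ) :
    dotProduct x (loewner p (r : ℝ) *ᵥ x) =
      ∑ a : Fin r, momentMap p r x a * momentMap p r x a.rev := by
  have hmv : ∀ i, (loewner p (r : ℝ) *ᵥ x) i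
      = ∑ a : Fin r, p i ^ (a : ℕ) * momentMap p r x a.rev := by
    intro i
    simp only [mulVec, dotProduct]
    rw [Finset.sum_congr rfl fun j _ => by
      rw [loewner_entry p hp hinj hr1 i j, Finset.sum_mul]]
    rw [Finset.sum_comm]
    refine Finset.sum_congr rfl fun a _ => ?_
    rw [momentMap_apply, Finset.mul_sum]
    refine Finset.sum_congr rfl fun j _ => ?_
    rw [Fin.val_rev]
    have h2 : r - 1 - (a : ℕ) = r - ((a : ℕ) + 1) := by omega
    rw [h2]
    ring
  simp only [dotProduct, hmv, Finset.mul_sum]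
  rw [Finset.sum_comm]
  refine Finset.sum_congr rfl fun a _ => ?_
  rw [momentMap_apply p r x a, Finset.sum_mul]
  exact Finset.sum_congr rfl fun i _ => by ring

lemma moment_surj {n r : ℕ} (p : Fin n → ℝ) (hmono : StrictMono p) (hrn : r ≤ n) :
    Function.Surjective (momentMap p r) := by
  classical
  intro v
  set w : Fin r → ℝ := fun j => p (Fin.castLE hrn j) with hw
  set M : Matrix (Fin r) (Fin r) ℝ := (Matrix.vandermonde w)ᵀ with hM
  have hdet : M.det ≠ 0 := by
    rw [hM, Matrix.det_transpose, Matrix.det_vandermonde]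
    refine Finset.prod_ne_zero_iff.2 fun i _ => Finset.prod_ne_zero_iff.2 fun j hj => ?_
    have hij : i < j := Finset.mem_Ioi.1 hj
    have : w i < w j := hmono (by simpa using hij)
    exact sub_ne_zero.2 (ne_of_gt this)
  set c : Fin r → ℝ := M⁻¹ *ᵥ v with hc
  have hMc : M *ᵥ c = v := by
    rw [hc, Matrix.mulVec_mulVec, Matrix.mul_nonsing_inv M (isUnit_iff_ne_zero.2 hdet), Matrix.one_mulVec]
  refine ⟨fun i => ∑ j : Fin r, if i = Fin.castLE hrn j then c j else 0, ?_⟩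
  funext a
  rw [momentMap_apply]
  calc ∑ i, (∑ j : Fin r, if i = Fin.castLE hrn j then c j else 0) * p i ^ (a : ℕ)
      = ∑ i, ∑ j : Fin r, (if i = Fin.castLE hrn j then c j * p i ^ (a : ℕ) else 0) := by
        refine Finset.sum_congr rfl fun i _ => ?_
        rw [Finset.sum_mul]
        exact Finset.sum_congr rfl fun j _ => by split_ifs <;> simp
    _ = ∑ j : Fin r, ∑ i, (if i = Fin.castLE hrn j then c j * p i ^ (a : ℕ) else 0) :=
        Finset.sum_comm
    _ = ∑ j : Fin r, c j * p (Fin.castLE hrn j) ^ (a : ℕ) := by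
        refine Finset.sum_congr rfl fun j _ => ?_
        rw [Finset.sum_ite_eq' Finset.univ (Fin.castLE hrn j)
          (fun i => c j * p i ^ (a : ℕ))]
        simp
    _ = (M *ᵥ c) a := by
        simp only [Matrix.mulVec, dotProduct, hM, Matrix.transpose_apply,
          Matrix.vandermonde, hw]
        exact Finset.sum_congr rfl fun j _ => by rw [mul_comm]; rfl
    _ = v a := by rw [hMc]

lemma exists_definite_subspace {n r d : ℕ} (p : Fin n → ℝ) (hp : ∀ i, 0 < p i)
    (hmono : StrictMono p) (hr1 : 1 ≤ r) (hrn : r ≤ n) (s : ℝ) (hs : s * s = 1)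
    (v : Fin d → (Fin r → ℝ)) (emb : Fin d → Fin r)
    (h1 : ∀ m (a : Fin r), v m a.rev = s * v m a)
    (h2 : ∀ m m', v m' (emb m) = if m = m' then 1 else 0) :
    ∃ W : Submodule ℝ (EuclideanSpace ℝ (Fin n)), Module.finrank ℝ W = d ∧
      ∀ x ∈ W, x ≠ 0 →
        0 < s * dotProduct (x : Fin n → ℝ) (loewner p (r : ℝ) *ᵥ x) := by
  classical
  have hinj : Function.Injective p := hmono.injective
  have hsurj := moment_surj p hmono hrn
  choose xv hxv using fun m => hsurj (v m)
  refine ⟨Submodule.span ℝ (Set.range fun m =>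
    WithLp.toLp 2 (xv m : Fin n → ℝ)), ?_, ?_⟩
  · rw [finrank_span_eq_card]
    · simp
    · rw [Fintype.linearIndependent_iff]
      intro g hg m0
      have hg' : momentMap p r (∑ m, g m • xv m) = 0 := by
        have : (∑ m, g m • xv m : Fin n → ℝ) = 0 := by
          simpa [WithLp.ofLp_sum, WithLp.ofLp_smul] using congrArg WithLp.ofLp hg
        rw [this, map_zero]
      rw [map_sum] at hg'
      have hthis := congrFun hg' (emb m0)
      simp only [Finset.sum_apply, Pi.zero_apply] at hthis
      have hterm : ∀ m, momentMap p r (g m • xv m) (emb m0)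
          = g m * (if m0 = m then 1 else 0) := by
        intro m
        rw [_root_.map_smul, Pi.smul_apply, hxv, h2, smul_eq_mul]
      rw [Finset.sum_congr rfl fun m _ => hterm m] at hthis
      simpa using hthis
  · intro x hx hx0
    rw [Submodule.mem_span_range_iff_exists_fun] at hx
    obtain ⟨c, hc⟩ := hx
    have hcne : c ≠ 0 := by
      rintro rfl
      apply hx0
      rw [← hc]
      simp
    set y : Fin r → ℝ := momentMap p r x with hy
    have hyc : y = ∑ m, c m • v m := by
      rw [hy, ← hc, WithLp.ofLp_sum, map_sum]
      exact Finset.sum_congr rfl fun m _ => by rw [WithLp.ofLp_smul, _root_.map_smul, hxv]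
    have hyrev : ∀ a : Fin r, y a.rev = s * y a := by
      intro a
      rw [hyc]
      simp only [Finset.sum_apply, Pi.smul_apply, smul_eq_mul, Finset.mul_sum]
      exact Finset.sum_congr rfl fun m _ => by rw [h1]; ring
    have hsq : s * dotProduct (x : Fin n → ℝ) (loewner p (r : ℝ) *ᵥ x)
        = ∑ a : Fin r, (y a) ^ 2 := by
      rw [quad_eq_moment p hp hinj hr1 x, Finset.mul_sum]
      refine Finset.sum_congr rfl fun a _ => ?_
      have h3 : momentMap p r x a = y a := by rw [hy]
      have h4 : momentMap p r x a.rev = y a.rev := by rw [hy]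
      rw [h3, h4, hyrev a]
      linear_combination (y a) ^ 2 * hs
    obtain ⟨m0, hm0⟩ := Function.ne_iff.1 hcne
    simp only [Pi.zero_apply] at hm0
    have hym0 : y (emb m0) = c m0 := by
      rw [hyc]
      simp only [Finset.sum_apply, Pi.smul_apply, smul_eq_mul]
      rw [Finset.sum_congr rfl fun m _ => by rw [h2 m0 m]]
      simp
    rw [hsq]
    refine Finset.sum_pos' (fun a _ => sq_nonneg _) ⟨emb m0, Finset.mem_univ _, ?_⟩
    have : y (emb m0) ≠ 0 := by rw [hym0]; exact hm0
    exact lt_of_le_of_ne (sq_nonneg _) (Ne.symm (pow_ne_zero 2 this))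

lemma loewner_rank_le {n r : ℕ} (p : Fin n → ℝ) (hp : ∀ i, 0 < p i)
    (hinj : Function.Injective p) (hr1 : 1 ≤ r) : (loewner p (r : ℝ)).rank ≤ r := by
  have hfact : loewner p (r : ℝ) =
      (Matrix.of fun (i : Fin n) (a : Fin r) => p i ^ (a : ℕ)) *
      (Matrix.of fun (a : Fin r) (j : Fin n) => p j ^ (r - 1 - (a : ℕ))) := by
    ext i j
    rw [loewner_entry p hp hinj hr1, Matrix.mul_apply]
    rfl
  calc (loewner p (r : ℝ)).rank
      ≤ (Matrix.of fun (a : Fin r) (j : Fin n) => p j ^ (r - 1 - (a : ℕ))).rank :=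
        hfact ▸ Matrix.rank_mul_le_right _ _
    _ ≤ Fintype.card (Fin r) := Matrix.rank_le_card_height _
    _ = r := Fintype.card_fin r

/-- If `r = 2k - 1` is an odd integer with `1 ≤ r ≤ n`, then the inertia of `L_r`
is `(k, n - r, k - 1)`. -/

theorem loewner_inertia_odd {n k r : ℕ} (p : Fin n → ℝ)
    (hp : ∀ i, 0 < p i) (hmono : StrictMono p)
    (hk : 1 ≤ k) (hr : r = 2 * k - 1) (hr1 : 1 ≤ r) (hrn : r ≤ n)
    (hA : (loewner p (r : ℝ)).IsHermitian) :
    Fintype.card {i // 0 < hA.eigenvalues i} = k ∧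
    Fintype.card {i // hA.eigenvalues i = 0} = n - r ∧
    Fintype.card {i // hA.eigenvalues i < 0} = k - 1 := by
  classical
  have hinj : Function.Injective p := hmono.injective
  have hkr : k ≤ r := by omega
  have hk1r : (k - 1) ≤ r := by omega
  -- positive definite subspace of dimension k
  set vpos : Fin k → Fin r → ℝ :=
    fun m a => if (a : ℕ) = (m : ℕ) ∨ (a : ℕ) = r - 1 - (m : ℕ) then 1 else 0 with hvpos
  have h1pos : ∀ m (a : Fin r), vpos m a.rev = 1 * vpos m a := by
    intro m a
    have ha : (a : ℕ) < r := a.isLt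
    have hm : (m : ℕ) < k := m.isLt
    rw [one_mul]
    simp only [hvpos, Fin.val_rev]
    have hiff : (r - ((a : ℕ) + 1) = (m : ℕ) ∨ r - ((a : ℕ) + 1) = r - 1 - (m : ℕ)) ↔
        ((a : ℕ) = (m : ℕ) ∨ (a : ℕ) = r - 1 - (m : ℕ)) := by omega
    rw [if_congr hiff rfl rfl]
  have h2pos : ∀ m m' : Fin k, vpos m' (Fin.castLE hkr m) = if m = m' then 1 else 0 := by
    intro m m'
    have hm : (m : ℕ) < k := m.isLt
    have hm' : (m' : ℕ) < k := m'.isLt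
    simp only [hvpos, Fin.coe_castLE]
    have hiff : ((m : ℕ) = (m' : ℕ) ∨ (m : ℕ) = r - 1 - (m' : ℕ)) ↔ m = m' := by
      rw [Fin.ext_iff]; omega
    rw [if_congr hiff rfl rfl]
  obtain ⟨Wpos, hWprank, hWppos⟩ := exists_definite_subspace p hp hmono hr1 hrn 1
    (by norm_num) vpos (Fin.castLE hkr) h1pos h2pos
  have hcpos : k ≤ Fintype.card {i // 0 < hA.eigenvalues i} := by
    have hle := finrank_le_card_sign hA 1 Wpos hWppos
    rw [hWprank] at hle
    rwa [Fintype.card_congr (Equiv.subtypeEquivRight fun i => by rw [one_mul])] at hle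
  -- negative definite subspace of dimension k - 1
  set vneg : Fin (k - 1) → Fin r → ℝ :=
    fun m a => if (a : ℕ) = (m : ℕ) then 1 else
      if (a : ℕ) = r - 1 - (m : ℕ) then -1 else 0 with hvneg
  have h1neg : ∀ m (a : Fin r), vneg m a.rev = (-1) * vneg m a := by
    intro m a
    have ha : (a : ℕ) < r := a.isLt
    have hm : (m : ℕ) < k - 1 := m.isLt
    simp only [hvneg, Fin.val_rev]
    by_cases h1 : (a : ℕ) = (m : ℕ)
    · have e1 : ¬(r - ((a : ℕ) + 1) = (m : ℕ)) := by omega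
      have e2 : r - ((a : ℕ) + 1) = r - 1 - (m : ℕ) := by omega
      rw [if_neg e1, if_pos e2, if_pos h1]; norm_num
    · by_cases h2 : (a : ℕ) = r - 1 - (m : ℕ)
      · have e1 : r - ((a : ℕ) + 1) = (m : ℕ) := by omega
        rw [if_pos e1, if_neg h1, if_pos h2]; norm_num
      · have e1 : ¬(r - ((a : ℕ) + 1) = (m : ℕ)) := by omega
        have e2 : ¬(r - ((a : ℕ) + 1) = r - 1 - (m : ℕ)) := by omega
        rw [if_neg e1, if_neg e2, if_neg h1, if_neg h2]; norm_num
  have h2neg : ∀ m m' : Fin (k - 1),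
      vneg m' (Fin.castLE hk1r m) = if m = m' then 1 else 0 := by
    intro m m'
    have hm : (m : ℕ) < k - 1 := m.isLt
    have hm' : (m' : ℕ) < k - 1 := m'.isLt
    simp only [hvneg, Fin.coe_castLE]
    by_cases h : (m : ℕ) = (m' : ℕ)
    · rw [if_pos h, if_pos (Fin.ext h)]
    · have e2 : ¬((m : ℕ) = r - 1 - (m' : ℕ)) := by omega
      rw [if_neg h, if_neg e2, if_neg fun hh => h (congrArg Fin.val hh)]
  obtain ⟨Wneg, hWnrank, hWnneg⟩ := exists_definite_subspace p hp hmono hr1 hrn (-1)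
    (by norm_num) vneg (Fin.castLE hk1r) h1neg h2neg
  have hcneg : k - 1 ≤ Fintype.card {i // hA.eigenvalues i < 0} := by
    have hle := finrank_le_card_sign hA (-1) Wneg hWnneg
    rw [hWnrank] at hle
    rwa [Fintype.card_congr (Equiv.subtypeEquivRight fun i => by
      rw [neg_one_mul, neg_pos])] at hle
  -- rank bound
  have hrank := hA.rank_eq_card_non_zero_eigs
  have hrankle := loewner_rank_le p hp hinj hr1
  have hsplit : Fintype.card {i // hA.eigenvalues i ≠ 0}
      = Fintype.card {i // 0 < hA.eigenvalues i}
        + Fintype.card {i // hA.eigenvalues i < 0} := by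
    rw [Fintype.card_congr (Equiv.subtypeEquivRight fun i =>
      (by constructor
          · intro h; rcases lt_or_gt_of_ne h with h' | h'
            · exact Or.inr h'
            · exact Or.inl h'
          · rintro (h | h)
            · exact ne_of_gt h
            · exact ne_of_lt h :
        hA.eigenvalues i ≠ 0 ↔ (0 < hA.eigenvalues i ∨ hA.eigenvalues i < 0)))]
    exact Fintype.card_subtype_or_disjoint _ _ (by
      rintro q hq1 hq2 i hi
      exact absurd (hq2 i hi) (not_lt.2 (le_of_lt (hq1 i hi))))
  have hcompl : Fintype.card {i // ¬ hA.eigenvalues i = 0}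
      = n - Fintype.card {i // hA.eigenvalues i = 0} := by
    have := Fintype.card_subtype_compl (fun i => hA.eigenvalues i = 0)
    simpa using this
  have hzn : Fintype.card {i // hA.eigenvalues i = 0} ≤ n := by
    have := Fintype.card_subtype_le (fun i : Fin n => hA.eigenvalues i = 0)
    simpa using this
  have f3 : Fintype.card {i // 0 < hA.eigenvalues i}
      + Fintype.card {i // hA.eigenvalues i < 0} ≤ r := by
    rw [← hsplit, ← hrank]; exact hrankle
  have f4 : n - Fintype.card {i // hA.eigenvalues i = 0}
      = Fintype.card {i // 0 < hA.eigenvalues i}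
        + Fintype.card {i // hA.eigenvalues i < 0} := by
    rw [← hsplit]
    rw [show Fintype.card {i // hA.eigenvalues i ≠ 0}
      = Fintype.card {i // ¬ hA.eigenvalues i = 0} from rfl, hcompl]
  omega
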